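/- arXiv:1004.2995 — 2 statements merged into one kernel-verified Lean document; each statement's English description precedes it below -/
import Mathlib

section
/- Corollary of the oracle inequality: under the assumptions of Theorem 7, if additionally μ ≥ (1+θ)d₁²(PE) and r = rank(A), then ‖XÂ − XA‖_F² ≤ 2c(θ)·μ·r with c(θ) = 1 + 2/θ. -/
open Matrix MeasureTheory

/-- List of singular values of a real matrix, sorted in decreasing order
(square roots of the eigenvalues of `Aᵀ * A`). -/
noncomputable def svList {m n : ℕ} (A : Matrix (Fin m) (Fin n) ℝ) : List ℝ :=
  (((List.ofFn (Matrix.isHermitian_conjTranspose_mul_self A).eigenvalues).map Real.sqrt).mergeSort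
    (fun a b => decide (b ≤ a)))

/-- `sv A k` is the `k`-th largest singular value of `A` (1-indexed); `0` if `k` exceeds
the number of singular values. -/
noncomputable def sv {m n : ℕ} (A : Matrix (Fin m) (Fin n) ℝ) (k : ℕ) : ℝ :=
  (svList A).getD (k - 1) 0

/-- Nuclear norm: sum of the singular values. -/
noncomputable def nuclearNorm {m n : ℕ} (A : Matrix (Fin m) (Fin n) ℝ) : ℝ :=
  (svList A).sum

/-- Squared Frobenius norm. -/
noncomputable def frobSq {m n : ℕ} (A : Matrix (Fin m) (Fin n) ℝ) : ℝ :=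
  ∑ i, ∑ j, (A i j) ^ 2

/-- Frobenius inner product. -/
noncomputable def frobInner {m n : ℕ} (C D : Matrix (Fin m) (Fin n) ℝ) : ℝ :=
  ∑ i, ∑ j, C i j * D i j

section Aux
open Module

lemma svList_mem_nonneg {m n : ℕ} (M : Matrix (Fin m) (Fin n) ℝ) {x : ℝ}
    (hx : x ∈ svList M) : 0 ≤ x := by
  unfold svList at hx
  rw [(List.mergeSort_perm _ _).mem_iff] at hx
  obtain ⟨y, -, rfl⟩ := List.mem_map.1 hx
  exact Real.sqrt_nonneg y

lemma sv_one_nonneg {m n : ℕ} (M : Matrix (Fin m) (Fin n) ℝ) : 0 ≤ sv M 1 := by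
  rcases h : svList M with _ | ⟨a, t⟩
  · simp [sv, h]
  · have : a ∈ svList M := h ▸ List.mem_cons_self
    simpa [sv, h] using svList_mem_nonneg M this

lemma le_sv_one {m n : ℕ} (M : Matrix (Fin m) (Fin n) ℝ) {x : ℝ}
    (hx : x ∈ svList M) : x ≤ sv M 1 := by
  have hsorted : (svList M).Pairwise (fun a b => (decide (b ≤ a) : Bool)) := by
    unfold svList
    exact List.pairwise_mergeSort
      (fun a b c hab hbc => by simp only [decide_eq_true_eq] at *; linarith)
      (fun a b => by simpa using le_total b a) _
  rcases h : svList M with _ | ⟨a, t⟩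
  · rw [h] at hx; simp at hx
  · rw [h] at hx hsorted
    rcases List.mem_cons.1 hx with rfl | hxt
    · simp [sv, h]
    · have := (List.pairwise_cons.1 hsorted).1 x hxt
      simp only [decide_eq_true_eq] at this
      simpa [sv, h] using this

lemma eig_le_sv_one_sq {m n : ℕ} (M : Matrix (Fin m) (Fin n) ℝ) (i : Fin n) :
    (Matrix.isHermitian_conjTranspose_mul_self M).eigenvalues i ≤ (sv M 1)^2 := by
  set lam := (Matrix.isHermitian_conjTranspose_mul_self M).eigenvalues i with hl
  have hnn : 0 ≤ lam := by
    have := (Matrix.posSemidef_conjTranspose_mul_self M).eigenvalues_nonneg i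
    convert this using 2
  have hmem : Real.sqrt lam ∈ svList M := by
    unfold svList
    rw [(List.mergeSort_perm _ _).mem_iff]
    exact List.mem_map_of_mem (List.mem_ofFn.2 ⟨i, rfl⟩)
  have h1 : Real.sqrt lam ≤ sv M 1 := le_sv_one M hmem
  calc lam = (Real.sqrt lam)^2 := (Real.sq_sqrt hnn).symm
    _ ≤ (sv M 1)^2 := pow_le_pow_left₀ (Real.sqrt_nonneg _) h1 2

lemma rayleigh_le {n : ℕ} (N : Matrix (Fin n) (Fin n) ℝ) (hN : N.IsHermitian)
    {L : ℝ} (hL : ∀ i, hN.eigenvalues i ≤ L) (hL0 : 0 ≤ L) (u : Fin n → ℝ) :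
    u ⬝ᵥ (N *ᵥ u) ≤ L * (u ⬝ᵥ u) := by
  set U : Matrix (Fin n) (Fin n) ℝ := (hN.eigenvectorUnitary : Matrix (Fin n) (Fin n) ℝ) with hU
  have hUU : U * star U = 1 := (Matrix.mem_unitaryGroup_iff).mp hN.eigenvectorUnitary.2
  have hy : star U *ᵥ u = u ᵥ* U := by
    funext j
    simp [Matrix.mulVec, Matrix.vecMul, dotProduct, Matrix.conjTranspose_apply, mul_comm]
  set y := u ᵥ* U with hydef
  have hspec := hN.spectral_theorem
  have h1 : u ⬝ᵥ (N *ᵥ u) = ∑ j, hN.eigenvalues j * (y j)^2 := by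
    conv_lhs => rw [hspec, Unitary.conjStarAlgAut_apply, ← hU]
    rw [← Matrix.mulVec_mulVec, ← Matrix.mulVec_mulVec, dotProduct_mulVec, hy]
    simp only [Matrix.mulVec_diagonal, dotProduct]
    refine Finset.sum_congr rfl fun x _ => ?_
    show y x * ((RCLike.ofReal ∘ hN.eigenvalues) x * y x) = _
    simp only [Function.comp_apply, RCLike.ofReal_real_eq_id, id_eq]
    ring
  have h2 : ∑ j, (y j)^2 = u ⬝ᵥ u := by
    have e1 : ∑ j, (y j)^2 = (u ᵥ* U) ⬝ᵥ (star U *ᵥ u) := by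
      rw [hy]; simp [dotProduct, sq, ← hydef]
    rw [e1, dotProduct_mulVec, Matrix.vecMul_vecMul, hUU, Matrix.vecMul_one]
  calc u ⬝ᵥ (N *ᵥ u) = ∑ j, hN.eigenvalues j * (y j)^2 := h1
    _ ≤ ∑ j, L * (y j)^2 := Finset.sum_le_sum fun j _ =>
        mul_le_mul_of_nonneg_right (hL j) (sq_nonneg _)
    _ = L * ∑ j, (y j)^2 := by rw [Finset.mul_sum]
    _ = L * (u ⬝ᵥ u) := by rw [h2]

lemma vecMul_sq_le {m n : ℕ} (M : Matrix (Fin m) (Fin n) ℝ) (v : Fin m → ℝ) :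
    ∑ j, (∑ i, v i * M i j)^2 ≤ (sv M 1)^2 * ∑ i, (v i)^2 := by
  set L := (sv M 1)^2 with hLdef
  have hL0 : 0 ≤ L := sq_nonneg _
  set w := v ᵥ* M with hw
  have hwj : ∀ j, (∑ i, v i * M i j) = w j := by
    intro j; rw [hw]; simp [Matrix.vecMul, dotProduct]
  have hray := rayleigh_le (Mᵀ * M) (Matrix.isHermitian_conjTranspose_mul_self M)
    (fun i => eig_le_sv_one_sq M i) hL0 w
  have hMM : w ⬝ᵥ ((Mᵀ * M) *ᵥ w) = (M *ᵥ w) ⬝ᵥ (M *ᵥ w) := by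
    rw [← Matrix.mulVec_mulVec, dotProduct_mulVec (v := w) (A := Mᵀ),
      Matrix.vecMul_transpose, dotProduct_comm]
  have hww : w ⬝ᵥ w = v ⬝ᵥ (M *ᵥ w) := by
    rw [hw, ← dotProduct_mulVec]
  have hCS : (v ⬝ᵥ (M *ᵥ w))^2 ≤ (v ⬝ᵥ v) * ((M *ᵥ w) ⬝ᵥ (M *ᵥ w)) := by
    have := Finset.sum_mul_sq_le_sq_mul_sq Finset.univ v (M *ᵥ w)
    simpa [dotProduct, sq] using this
  have hv0 : 0 ≤ v ⬝ᵥ v := Finset.sum_nonneg fun i _ => mul_self_nonneg _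
  have hw0 : 0 ≤ w ⬝ᵥ w := Finset.sum_nonneg fun i _ => mul_self_nonneg _
  have hkey : (w ⬝ᵥ w)^2 ≤ (v ⬝ᵥ v) * (L * (w ⬝ᵥ w)) := by
    calc (w ⬝ᵥ w)^2 = (v ⬝ᵥ (M *ᵥ w))^2 := by rw [hww]
      _ ≤ (v ⬝ᵥ v) * ((M *ᵥ w) ⬝ᵥ (M *ᵥ w)) := hCS
      _ ≤ (v ⬝ᵥ v) * (L * (w ⬝ᵥ w)) := by
          refine mul_le_mul_of_nonneg_left ?_ hv0
          rw [← hMM]; exact hray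
  have hgoal : w ⬝ᵥ w ≤ L * (v ⬝ᵥ v) := by
    rcases eq_or_lt_of_le hw0 with h0 | hpos
    · rw [← h0]; positivity
    · nlinarith [hkey]
  have e1 : ∑ j, (∑ i, v i * M i j)^2 = w ⬝ᵥ w := by
    simp only [hwj]; simp [dotProduct, sq]
  have e2 : ∑ i, (v i)^2 = v ⬝ᵥ v := by simp [dotProduct, sq]
  rw [e1, e2]; exact hgoal

lemma frobSq_nonneg {m n : ℕ} (A : Matrix (Fin m) (Fin n) ℝ) : 0 ≤ frobSq A := by
  unfold frobSq; positivity

lemma frobInner_le {m n q : ℕ} (M D : Matrix (Fin m) (Fin n) ℝ)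
    (S : Submodule ℝ (EuclideanSpace ℝ (Fin m)))
    (hcol : ∀ j, ((WithLp.equiv 2 (Fin m → ℝ)).symm (fun i => D i j)) ∈ S)
    (hdim : finrank ℝ S ≤ q) :
    frobInner M D ≤ Real.sqrt q * sv M 1 * Real.sqrt (frobSq D) := by
  classical
  set q' := finrank ℝ S with hq'
  let b : OrthonormalBasis (Fin q') ℝ S := stdOrthonormalBasis ℝ S
  set v : Fin q' → EuclideanSpace ℝ (Fin m) := fun k => (b k : EuclideanSpace ℝ (Fin m)) with hv
  -- orthonormality of v in ambient space
  have hortho : ∀ k l, (∑ i, v k i * v l i) = if k = l then (1:ℝ) else 0 := by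
    intro k l
    have h1 : (inner ℝ (v k) (v l) : ℝ) = inner ℝ (b k) (b l) :=
      (Submodule.coe_inner S (b k) (b l)).symm
    have h2 : (inner ℝ (b k) (b l) : ℝ) = if k = l then 1 else 0 :=
      orthonormal_iff_ite.mp b.orthonormal k l
    have h3 : (inner ℝ (v k) (v l) : ℝ) = ∑ i, v k i * v l i := by
      rw [PiLp.inner_apply]; simp [RCLike.inner_apply, mul_comm]
    rw [← h3, h1, h2]
  -- representation of columns
  set c : Fin n → EuclideanSpace ℝ (Fin m) :=
    fun j => (WithLp.equiv 2 (Fin m → ℝ)).symm (fun i => D i j) with hc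
  have hci : ∀ j i, c j i = D i j := fun j i => rfl
  set R : Fin q' → Fin n → ℝ := fun k j => ∑ i, v k i * D i j with hR
  have hrepr : ∀ j i, D i j = ∑ k, R k j * v k i := by
    intro j i
    have h := b.sum_repr ⟨c j, hcol j⟩
    have h2 : ∀ k, b.repr ⟨c j, hcol j⟩ k = (inner ℝ (v k) (c j) : ℝ) := by
      intro k
      rw [b.repr_apply_apply]
      exact (Submodule.coe_inner S (b k) ⟨c j, hcol j⟩).symm
    have h3 : c j = ∑ k, (inner ℝ (v k) (c j) : ℝ) • v k := by
      conv_lhs => rw [show c j = ((⟨c j, hcol j⟩ : S) : EuclideanSpace ℝ (Fin m)) from rfl, ← h]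
      push_cast [Submodule.coe_sum]
      refine Finset.sum_congr rfl fun k _ => ?_
      rw [h2 k]
    have hmap := map_sum (EuclideanSpace.proj (𝕜 := ℝ) i)
      (fun k : Fin q' => (inner ℝ (v k) (c j) : ℝ) • v k) Finset.univ
    have h4 : ∀ k, (inner ℝ (v k) (c j) : ℝ) = R k j := by
      intro k
      rw [PiLp.inner_apply]; simp [RCLike.inner_apply, hR]
      exact Finset.sum_congr rfl fun x _ => mul_comm _ _
    calc D i j = c j i := rfl
      _ = (∑ k, (inner ℝ (v k) (c j) : ℝ) • v k) i := by rw [← h3]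
      _ = ∑ k, (inner ℝ (v k) (c j) : ℝ) * v k i := by
          simp only [PiLp.proj_apply, PiLp.smul_apply, smul_eq_mul] at hmap
          exact hmap
      _ = ∑ k, R k j * v k i := by simp only [h4]
  -- Parseval
  have hpar : ∀ j, ∑ i, (D i j)^2 = ∑ k, (R k j)^2 := by
    intro j
    calc ∑ i, (D i j)^2 = ∑ i, (∑ k, R k j * v k i) * (∑ l, R l j * v l i) := by
          refine Finset.sum_congr rfl fun i _ => ?_; rw [← hrepr j i]; ring
      _ = ∑ i, ∑ k, ∑ l, (R k j * v k i) * (R l j * v l i) := by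
          refine Finset.sum_congr rfl fun i _ => ?_; rw [Finset.sum_mul_sum]
      _ = ∑ k, ∑ i, ∑ l, (R k j * v k i) * (R l j * v l i) := Finset.sum_comm
      _ = ∑ k, ∑ l, ∑ i, (R k j * v k i) * (R l j * v l i) := by
          refine Finset.sum_congr rfl fun k _ => ?_; exact Finset.sum_comm
      _ = ∑ k, ∑ l, (R k j * R l j) * ∑ i, v k i * v l i := by
          refine Finset.sum_congr rfl fun k _ => Finset.sum_congr rfl fun l _ => ?_
          rw [Finset.mul_sum]; refine Finset.sum_congr rfl fun i _ => ?_; ring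
      _ = ∑ k, (R k j)^2 := by
          refine Finset.sum_congr rfl fun k _ => ?_
          simp only [hortho, mul_ite, mul_one, mul_zero]
          rw [Finset.sum_ite_eq]
          simp [sq]
  -- frobInner expansion
  set G : Fin q' → Fin n → ℝ := fun k j => ∑ i, v k i * M i j with hG
  have hfi : frobInner M D = ∑ k, ∑ j, R k j * G k j := by
    unfold frobInner
    calc ∑ i, ∑ j, M i j * D i j = ∑ i, ∑ j, ∑ k, R k j * (v k i * M i j) := by
          refine Finset.sum_congr rfl fun i _ => Finset.sum_congr rfl fun j _ => ?_
          rw [hrepr j i, Finset.mul_sum]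
          refine Finset.sum_congr rfl fun k _ => ?_; ring
      _ = ∑ j, ∑ i, ∑ k, R k j * (v k i * M i j) := Finset.sum_comm
      _ = ∑ j, ∑ k, ∑ i, R k j * (v k i * M i j) := by
          refine Finset.sum_congr rfl fun j _ => ?_; exact Finset.sum_comm
      _ = ∑ j, ∑ k, R k j * G k j := by
          refine Finset.sum_congr rfl fun j _ => Finset.sum_congr rfl fun k _ => ?_
          rw [hG, Finset.mul_sum]
      _ = ∑ k, ∑ j, R k j * G k j := Finset.sum_comm
  -- bound on G rows
  have hunit : ∀ k, ∑ i, (v k i)^2 = 1 := by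
    intro k
    have h := hortho k k
    rw [if_pos rfl] at h
    rw [← h]; refine Finset.sum_congr rfl fun i _ => ?_; ring
  have hGb : ∀ k, ∑ j, (G k j)^2 ≤ (sv M 1)^2 := by
    intro k
    have := vecMul_sq_le M (v k)
    rwa [hunit k, mul_one] at this
  -- Cauchy-Schwarz
  have hRR : ∑ k, ∑ j, (R k j)^2 = frobSq D := by
    rw [show ∑ k, ∑ j, (R k j)^2 = ∑ j, ∑ k, (R k j)^2 from Finset.sum_comm]
    unfold frobSq
    rw [show ∑ i, ∑ j, (D i j)^2 = ∑ j, ∑ i, (D i j)^2 from Finset.sum_comm]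
    exact (Finset.sum_congr rfl fun j _ => (hpar j).symm)
  have hGG : ∑ k, ∑ j, (G k j)^2 ≤ (q : ℝ) * (sv M 1)^2 := by
    calc ∑ k, ∑ j, (G k j)^2 ≤ ∑ k : Fin q', (sv M 1)^2 :=
          Finset.sum_le_sum fun k _ => hGb k
      _ = (q' : ℝ) * (sv M 1)^2 := by simp [mul_comm]
      _ ≤ (q : ℝ) * (sv M 1)^2 := by
          have : (q' : ℝ) ≤ (q : ℝ) := Nat.cast_le.mpr hdim
          nlinarith [sq_nonneg (sv M 1)]
  have hCS : (frobInner M D)^2 ≤ (frobSq D) * ((q : ℝ) * (sv M 1)^2) := by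
    have h := Finset.sum_mul_sq_le_sq_mul_sq (Finset.univ : Finset (Fin q' × Fin n))
      (fun p => R p.1 p.2) (fun p => G p.1 p.2)
    rw [Fintype.sum_prod_type, Fintype.sum_prod_type, Fintype.sum_prod_type] at h
    rw [hfi]
    calc (∑ k, ∑ j, R k j * G k j)^2 ≤ (∑ k, ∑ j, (R k j)^2) * (∑ k, ∑ j, (G k j)^2) := h
      _ ≤ (frobSq D) * ((q : ℝ) * (sv M 1)^2) := by
          rw [hRR]
          exact mul_le_mul_of_nonneg_left hGG (frobSq_nonneg D)
  calc frobInner M D ≤ |frobInner M D| := le_abs_self _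
    _ = Real.sqrt ((frobInner M D)^2) := (Real.sqrt_sq_eq_abs _).symm
    _ ≤ Real.sqrt ((frobSq D) * ((q : ℝ) * (sv M 1)^2)) := Real.sqrt_le_sqrt hCS
    _ = Real.sqrt q * sv M 1 * Real.sqrt (frobSq D) := by
        rw [Real.sqrt_mul (frobSq_nonneg D), Real.sqrt_mul (by positivity : (0:ℝ) ≤ (q:ℝ)),
          Real.sqrt_sq (sv_one_nonneg M)]
        ring

lemma final_arith (f s t g rA rh μ θ : ℝ) (hf0 : 0 ≤ f) (hs : s^2 = f) (hs0 : 0 ≤ s)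
    (ht0 : 0 ≤ t) (hg : g^2 = rA + rh) (hg0 : 0 ≤ g) (hμ : 0 < μ) (hθ : 0 < θ)
    (hrA0 : 0 ≤ rA) (hrh0 : 0 ≤ rh) (hev : (1+θ)*t^2 ≤ μ)
    (hmain : f ≤ 2*(g*t*s) + μ*rA - μ*rh) : f ≤ 2*(1+2/θ)*μ*rA := by
  have h1θ : (0:ℝ) < 1 + θ := by linarith
  have hamgm : 2 * (g * t * s) ≤ (1 + θ) * (g * t) ^ 2 + s ^ 2 / (1 + θ) := by
    have hsq1 : Real.sqrt (1 + θ) ^ 2 = 1 + θ := Real.sq_sqrt h1θ.le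
    have hc0 : Real.sqrt (1 + θ) ≠ 0 := by positivity
    have hsqA : (Real.sqrt (1 + θ) * (g * t)) ^ 2 = (1 + θ) * (g * t) ^ 2 := by
      rw [mul_pow, hsq1]
    have hsqB : (s / Real.sqrt (1 + θ)) ^ 2 = s ^ 2 / (1 + θ) := by
      rw [div_pow, hsq1]
    have hcross : (Real.sqrt (1 + θ) * (g * t)) * (s / Real.sqrt (1 + θ)) = g * t * s := by
      field_simp
    nlinarith [sq_nonneg (Real.sqrt (1 + θ) * (g * t) - s / Real.sqrt (1 + θ))]
  have hev2 : (1 + θ) * (g * t) ^ 2 ≤ μ * (rA + rh) := by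
    have h1 : (g * t) ^ 2 = (rA + rh) * t ^ 2 := by rw [mul_pow, hg]
    rw [h1]
    nlinarith [hev, hrA0, hrh0]
  have hstep2 : f ≤ 2 * μ * rA + f / (1 + θ) := by
    have hB : s ^ 2 / (1 + θ) = f / (1 + θ) := by rw [hs]
    nlinarith [hmain, hamgm, hev2]
  have hdivf : f / (1 + θ) * (1 + θ) = f := div_mul_cancel₀ f (ne_of_gt h1θ)
  have hfin : f * θ ≤ 2 * μ * rA * (1 + θ) := by
    have h5 := mul_le_mul_of_nonneg_right hstep2 h1θ.le
    rw [add_mul, hdivf] at h5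
    nlinarith [h5]

  have hR : 2 * (1 + 2 / θ) * μ * rA * θ = 2 * (θ + 2) * μ * rA := by
    field_simp
  nlinarith [hfin, hR, hμ, hrA0, hθ]

lemma frobSq_sub_expand {m n : ℕ} (C T : Matrix (Fin m) (Fin n) ℝ) :
    frobSq (C - T) = frobSq C - 2 * frobInner C T + frobSq T := by
  unfold frobSq frobInner
  rw [Finset.mul_sum, ← Finset.sum_sub_distrib, ← Finset.sum_add_distrib]
  refine Finset.sum_congr rfl fun i _ => ?_
  rw [Finset.mul_sum, ← Finset.sum_sub_distrib, ← Finset.sum_add_distrib]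
  refine Finset.sum_congr rfl fun j _ => ?_
  simp [Matrix.sub_apply]; ring

lemma frobInner_mul_left {m n : ℕ} (P : Matrix (Fin m) (Fin m) ℝ)
    (C D : Matrix (Fin m) (Fin n) ℝ) :
    frobInner C (P * D) = frobInner (Pᵀ * C) D := by
  unfold frobInner
  simp only [Matrix.mul_apply, Matrix.transpose_apply]
  calc ∑ i, ∑ j, C i j * ∑ k, P i k * D k j
      = ∑ i, ∑ j, ∑ k, (P i k * C i j) * D k j := by
        refine Finset.sum_congr rfl fun i _ => Finset.sum_congr rfl fun j _ => ?_
        rw [Finset.mul_sum]; exact Finset.sum_congr rfl fun k _ => by ring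
    _ = ∑ i, ∑ k, ∑ j, (P i k * C i j) * D k j := by
        refine Finset.sum_congr rfl fun i _ => ?_; exact Finset.sum_comm
    _ = ∑ k, ∑ i, ∑ j, (P i k * C i j) * D k j := Finset.sum_comm
    _ = ∑ k, ∑ j, ∑ i, (P i k * C i j) * D k j := by
        refine Finset.sum_congr rfl fun k _ => ?_; exact Finset.sum_comm
    _ = ∑ k, ∑ j, (∑ i, P i k * C i j) * D k j := by
        refine Finset.sum_congr rfl fun k _ => Finset.sum_congr rfl fun j _ => ?_
        rw [Finset.sum_mul]

end Aux

/-- Corollary of Theorem 7: with μ ≥ (1+θ)d₁²(PE) and r = rank(A),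
‖XÂ − XA‖_F² ≤ 2c(θ)μr. -/
theorem rsc_oracle_rank_bound {m n p : ℕ}
    (Y : Matrix (Fin m) (Fin n) ℝ) (X : Matrix (Fin m) (Fin p) ℝ)
    (A : Matrix (Fin p) (Fin n) ℝ)
    (P : Matrix (Fin m) (Fin m) ℝ)
    (hPsymm : Pᵀ = P) (hPidem : P * P = P) (hPX : P * X = X)
    (hPrange : ∀ u : Fin m → ℝ, ∃ w : Fin p → ℝ, P *ᵥ u = X *ᵥ w)
    (μ : ℝ) (hμ : 0 < μ)
    (Ahat : Matrix (Fin p) (Fin n) ℝ)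
    (hmin : ∀ B : Matrix (Fin p) (Fin n) ℝ,
      frobSq (Y - X * Ahat) + μ * Ahat.rank ≤ frobSq (Y - X * B) + μ * B.rank)
    (θ : ℝ) (hθ : 0 < θ)
    (hevent : (1 + θ) * (sv (P * (Y - X * A)) 1) ^ 2 ≤ μ) :
    frobSq (X * Ahat - X * A) ≤ 2 * (1 + 2 / θ) * μ * A.rank := by
  classical
  set E : Matrix (Fin m) (Fin n) ℝ := Y - X * A with hE
  set Δ : Matrix (Fin m) (Fin n) ℝ := X * Ahat - X * A with hΔ
  have hYB : Y - X * Ahat = E - Δ := by rw [hE, hΔ]; abel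
  have hminA := hmin A
  rw [hYB, frobSq_sub_expand, ← hE] at hminA
  have hstep1 : frobSq Δ ≤ 2 * frobInner E Δ + μ * A.rank - μ * Ahat.rank := by
    linarith
  -- projection
  have hPD : P * Δ = Δ := by
    rw [hΔ, Matrix.mul_sub, ← Matrix.mul_assoc, ← Matrix.mul_assoc, hPX]
  have hEΔ : frobInner E Δ = frobInner (P * E) Δ := by
    conv_lhs => rw [← hPD]
    rw [frobInner_mul_left, hPsymm]
  -- subspace of columns
  set e : (Fin m → ℝ) ≃ₗ[ℝ] EuclideanSpace ℝ (Fin m) :=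
    (WithLp.linearEquiv 2 ℝ (Fin m → ℝ)).symm with he
  set W : Submodule ℝ (Fin m → ℝ) :=
    Submodule.span ℝ (Set.range (X * Ahat)ᵀ) ⊔ Submodule.span ℝ (Set.range (X * A)ᵀ) with hW
  set S : Submodule ℝ (EuclideanSpace ℝ (Fin m)) := W.map e.toLinearMap with hS
  have hcol : ∀ j, ((WithLp.equiv 2 (Fin m → ℝ)).symm (fun i => Δ i j)) ∈ S := by
    intro j
    have hmemW : (fun i => Δ i j) ∈ W := by
      have h1 : (fun i => Δ i j) = (X * Ahat)ᵀ j - (X * A)ᵀ j := by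
        funext i; simp only [hΔ, Matrix.sub_apply, Pi.sub_apply, Matrix.transpose_apply]
      rw [h1]
      exact sub_mem
        (Submodule.mem_sup_left (Submodule.subset_span (Set.mem_range_self j)))
        (Submodule.mem_sup_right (Submodule.subset_span (Set.mem_range_self j)))
    exact Submodule.mem_map_of_mem hmemW
  have hdim : Module.finrank ℝ S ≤ A.rank + Ahat.rank := by
    rw [hS, LinearEquiv.finrank_map_eq]
    have h1 : Module.finrank ℝ W ≤
        Module.finrank ℝ (Submodule.span ℝ (Set.range (X * Ahat)ᵀ)) +
        Module.finrank ℝ (Submodule.span ℝ (Set.range (X * A)ᵀ)) :=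
      Submodule.finrank_add_le_finrank_add_finrank _ _
    have h2 : Module.finrank ℝ (Submodule.span ℝ (Set.range (X * Ahat)ᵀ)) ≤ Ahat.rank :=
      le_trans (le_of_eq (Matrix.rank_eq_finrank_span_cols _).symm)
        (Matrix.rank_mul_le_right _ _)
    have h3 : Module.finrank ℝ (Submodule.span ℝ (Set.range (X * A)ᵀ)) ≤ A.rank :=
      le_trans (le_of_eq (Matrix.rank_eq_finrank_span_cols _).symm)
        (Matrix.rank_mul_le_right _ _)
    omega
  have hdual := frobInner_le (P * E) Δ S hcol hdim
  -- arithmetic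
  set f := frobSq Δ with hf
  have hf0 : 0 ≤ f := frobSq_nonneg Δ
  set s := Real.sqrt f with hsdef
  have hs : s ^ 2 = f := Real.sq_sqrt hf0
  have hs0 : 0 ≤ s := Real.sqrt_nonneg _
  set t := sv (P * E) 1 with htdef
  have ht0 : 0 ≤ t := sv_one_nonneg _
  set g := Real.sqrt ((A.rank + Ahat.rank : ℕ) : ℝ) with hgdef
  have hg : g ^ 2 = (A.rank : ℝ) + (Ahat.rank : ℝ) := by
    rw [hgdef, Real.sq_sqrt (by positivity)]; push_cast; ring
  have hg0 : 0 ≤ g := Real.sqrt_nonneg _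
  have h1θ : (0:ℝ) < 1 + θ := by linarith
  have hmain : f ≤ 2 * (g * t * s) + μ * A.rank - μ * Ahat.rank := by
    rw [hEΔ] at hstep1
    linarith [hstep1, hdual]
  exact final_arith f s t g (A.rank : ℝ) (Ahat.rank : ℝ) μ θ hf0 hs hs0 ht0 hg hg0
    hμ hθ (Nat.cast_nonneg _) (Nat.cast_nonneg _) hevent hmain
end

section
/- Deterministic version of Theorem 10: let à minimize ‖Y − XB‖_F² + 2τ‖B‖₁ over p×n matrices B, where Y = XA + E. If d₁(X'E) ≤ τ, then for every p×n matrix B, ‖XÃ − XA‖_F² ≤ ‖XB − XA‖_F² + 4τ‖B‖₁. -/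
open Matrix MeasureTheory

namespace NNPAux

variable {p n : ℕ}

lemma sum_inner_aux (b : OrthonormalBasis (Fin n) ℝ (EuclideanSpace ℝ (Fin n)))
    (x y : Fin n → ℝ) :
    ∑ j, (∑ k, x k * b j k) * (∑ k, b j k * y k) = ∑ k, x k * y k := by
  have h := b.sum_inner_mul_inner ((WithLp.equiv 2 (Fin n → ℝ)).symm x)
    ((WithLp.equiv 2 (Fin n → ℝ)).symm y)
  simp [PiLp.inner_apply, RCLike.inner_apply, conj_trivial] at h
  have e : ∑ k, x k * y k = ∑ k, y k * x k := Finset.sum_congr rfl fun k _ => mul_comm _ _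
  rw [e, ← h]
  refine Finset.sum_congr rfl fun j _ => ?_
  congr 1 <;> exact Finset.sum_congr rfl fun k _ => mul_comm _ _

lemma dot_b (b : OrthonormalBasis (Fin n) ℝ (EuclideanSpace ℝ (Fin n))) (i j : Fin n) :
    ∑ k, b i k * b j k = if i = j then (1:ℝ) else 0 := by
  have h := orthonormal_iff_ite.mp b.orthonormal i j
  simp [PiLp.inner_apply, RCLike.inner_apply, conj_trivial] at h
  rw [← h]
  exact Finset.sum_congr rfl fun k _ => mul_comm _ _

lemma dot_CC (C : Matrix (Fin p) (Fin n) ℝ) (x y : Fin n → ℝ) :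
    (C *ᵥ x) ⬝ᵥ (C *ᵥ y) = x ⬝ᵥ ((Cᴴ * C) *ᵥ y) := by
  rw [← mulVec_mulVec, dotProduct_mulVec x, conjTranspose_eq_transpose_of_trivial,
    vecMul_transpose, dotProduct_comm, dotProduct_mulVec]

lemma nuclearNorm_eq (C : Matrix (Fin p) (Fin n) ℝ) :
    nuclearNorm C = ∑ j, Real.sqrt ((Matrix.isHermitian_conjTranspose_mul_self C).eigenvalues j) := by
  rw [nuclearNorm, svList, (List.mergeSort_perm _ _).sum_eq, List.map_ofFn, List.sum_ofFn]
  rfl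

lemma sqrt_le_sv1 (M : Matrix (Fin p) (Fin n) ℝ) (j : Fin n) :
    Real.sqrt ((Matrix.isHermitian_conjTranspose_mul_self M).eigenvalues j) ≤ sv M 1 := by
  show _ ≤ (svList M).getD 0 0
  have hmem : Real.sqrt ((Matrix.isHermitian_conjTranspose_mul_self M).eigenvalues j) ∈ svList M := by
    rw [svList, List.mem_mergeSort]
    exact List.mem_map_of_mem (List.mem_ofFn.2 ⟨j, rfl⟩)
  have hsorted : (svList M).Pairwise (fun a b : ℝ => decide (b ≤ a) = true) := by
    refine List.pairwise_mergeSort ?_ ?_ _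
    · intro a b c hab hbc
      simp only [decide_eq_true_eq] at *
      exact le_trans hbc hab
    · intro a b
      simpa using le_total b a
  rcases h : svList M with _ | ⟨a, t⟩
  · rw [h] at hmem; simp at hmem
  · rw [h] at hmem hsorted
    rcases List.mem_cons.1 hmem with rfl | hm
    · simp
    · have := (List.pairwise_cons.1 hsorted).1 _ hm
      simpa using this

lemma sv1_nonneg (M : Matrix (Fin p) (Fin n) ℝ) : 0 ≤ sv M 1 := by
  show (0:ℝ) ≤ (svList M).getD 0 0
  rcases h : svList M with _ | ⟨a, t⟩
  · simp
  · have : a ∈ svList M := by rw [h]; exact List.mem_cons_self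
    rw [svList, List.mem_mergeSort, List.mem_map] at this
    obtain ⟨x, -, rfl⟩ := this
    simpa using Real.sqrt_nonneg x

lemma trace_formula (b : OrthonormalBasis (Fin n) ℝ (EuclideanSpace ℝ (Fin n)))
    (M C : Matrix (Fin p) (Fin n) ℝ) :
    frobInner M C = ∑ j, ∑ i, (M *ᵥ ⇑(b j)) i * (C *ᵥ ⇑(b j)) i := by
  calc frobInner M C = ∑ i, ∑ k, M i k * C i k := rfl
    _ = ∑ i, ∑ j, (∑ k, M i k * b j k) * (∑ k, b j k * C i k) :=
        Finset.sum_congr rfl fun i _ => (sum_inner_aux b (M i) (C i)).symm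
    _ = ∑ j, ∑ i, (M *ᵥ ⇑(b j)) i * (C *ᵥ ⇑(b j)) i := by
        rw [Finset.sum_comm]
        refine Finset.sum_congr rfl fun j _ => Finset.sum_congr rfl fun i _ => ?_
        simp only [mulVec, dotProduct]
        congr 1
        exact Finset.sum_congr rfl fun k _ => mul_comm _ _

/-- Cauchy-Schwarz for sums. -/
lemma cs_sum {ι : Type*} [Fintype ι] (a c : ι → ℝ) :
    ∑ i, a i * c i ≤ Real.sqrt (∑ i, a i ^ 2) * Real.sqrt (∑ i, c i ^ 2) := by
  have h := Finset.sum_mul_sq_le_sq_mul_sq Finset.univ a c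
  calc ∑ i, a i * c i ≤ |∑ i, a i * c i| := le_abs_self _
    _ = Real.sqrt ((∑ i, a i * c i) ^ 2) := (Real.sqrt_sq_eq_abs _).symm
    _ ≤ Real.sqrt ((∑ i, a i ^ 2) * ∑ i, c i ^ 2) := Real.sqrt_le_sqrt h
    _ = _ := Real.sqrt_mul (Finset.sum_nonneg fun i _ => sq_nonneg _) _

lemma trace_duality (M C : Matrix (Fin p) (Fin n) ℝ) {s : ℝ} (hs0 : 0 ≤ s)
    (hs : ∀ v : Fin n → ℝ, ∑ i, ((M *ᵥ v) i) ^ 2 ≤ s ^ 2 * ∑ k, (v k) ^ 2) :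
    frobInner M C ≤ s * nuclearNorm C := by
  set hH := Matrix.isHermitian_conjTranspose_mul_self C with hHdef
  set b := hH.eigenvectorBasis with hbdef
  have hb1 : ∀ j, ∑ k, (b j k) ^ 2 = 1 := by
    intro j
    have := dot_b b j j
    simpa [pow_two] using this
  have hCb : ∀ j, ∑ i, ((C *ᵥ ⇑(b j)) i) ^ 2 = hH.eigenvalues j := by
    intro j
    have h1 : ∑ i, ((C *ᵥ ⇑(b j)) i) ^ 2 = (C *ᵥ ⇑(b j)) ⬝ᵥ (C *ᵥ ⇑(b j)) := by
      simp [dotProduct, pow_two]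
    rw [h1, dot_CC, hH.mulVec_eigenvectorBasis, dotProduct_smul]
    have : (⇑(b j) : Fin n → ℝ) ⬝ᵥ ⇑(b j) = 1 := by
      simpa [dotProduct] using dot_b b j j
    rw [this]; simp
  have hμ0 : ∀ j, 0 ≤ hH.eigenvalues j := fun j => by
    rw [← hCb j]; exact Finset.sum_nonneg fun i _ => sq_nonneg _
  rw [trace_formula b M C, nuclearNorm_eq C, Finset.mul_sum]
  refine Finset.sum_le_sum fun j _ => ?_
  have hMb : Real.sqrt (∑ i, ((M *ᵥ ⇑(b j)) i) ^ 2) ≤ s := by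
    have h1 := hs ⇑(b j)
    rw [hb1 j, mul_one] at h1
    calc Real.sqrt (∑ i, ((M *ᵥ ⇑(b j)) i) ^ 2) ≤ Real.sqrt (s ^ 2) := Real.sqrt_le_sqrt h1
      _ = s := by rw [Real.sqrt_sq hs0]
  calc ∑ i, (M *ᵥ ⇑(b j)) i * (C *ᵥ ⇑(b j)) i
      ≤ Real.sqrt (∑ i, ((M *ᵥ ⇑(b j)) i) ^ 2) * Real.sqrt (∑ i, ((C *ᵥ ⇑(b j)) i) ^ 2) :=
        cs_sum _ _
    _ ≤ s * Real.sqrt (hH.eigenvalues j) := by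
        rw [hCb j]
        exact mul_le_mul_of_nonneg_right hMb (Real.sqrt_nonneg _)

lemma sv_bound (M : Matrix (Fin p) (Fin n) ℝ) (v : Fin n → ℝ) :
    ∑ i, ((M *ᵥ v) i) ^ 2 ≤ (sv M 1) ^ 2 * ∑ k, (v k) ^ 2 := by
  set hH := Matrix.isHermitian_conjTranspose_mul_self M with hHdef
  set b := hH.eigenvectorBasis with hbdef
  have hμ0 : ∀ j, 0 ≤ hH.eigenvalues j := fun j =>
    (Matrix.posSemidef_conjTranspose_mul_self M).eigenvalues_nonneg j
  have hsymm : (Mᴴ * M)ᵀ = Mᴴ * M := by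
    rw [← Matrix.conjTranspose_eq_transpose_of_trivial]; exact hH
  have key : ∀ j, ∑ k, b j k * ((Mᴴ * M) *ᵥ v) k = hH.eigenvalues j * ∑ k, b j k * v k := by
    intro j
    have h1 : (⇑(b j) : Fin n → ℝ) ⬝ᵥ ((Mᴴ * M) *ᵥ v) = ((Mᴴ * M) *ᵥ ⇑(b j)) ⬝ᵥ v := by
      rw [dotProduct_mulVec]
      congr 1
      conv_lhs => rw [← hsymm]
      rw [vecMul_transpose]
    have h2 := h1
    rw [hH.mulVec_eigenvectorBasis, smul_dotProduct] at h2
    simp [dotProduct, smul_eq_mul] at h2 ⊢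
    exact h2
  have step1 : ∑ i, ((M *ᵥ v) i) ^ 2 = v ⬝ᵥ ((Mᴴ * M) *ᵥ v) := by
    rw [← dot_CC]; simp [dotProduct, pow_two]
  have step2 : v ⬝ᵥ ((Mᴴ * M) *ᵥ v) =
      ∑ j, (∑ k, v k * b j k) * (∑ k, b j k * ((Mᴴ * M) *ᵥ v) k) :=
    (sum_inner_aux b v ((Mᴴ * M) *ᵥ v)).symm
  have step3 : ∑ j, (∑ k, v k * b j k) * (∑ k, b j k * ((Mᴴ * M) *ᵥ v) k)
      = ∑ j, hH.eigenvalues j * (∑ k, b j k * v k) ^ 2 := by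
    refine Finset.sum_congr rfl fun j _ => ?_
    rw [key j, pow_two]
    have : ∑ k, v k * b j k = ∑ k, b j k * v k :=
      Finset.sum_congr rfl fun k _ => mul_comm _ _
    rw [this]; ring
  have parseval : ∑ j, (∑ k, b j k * v k) ^ 2 = ∑ k, (v k) ^ 2 := by
    have h := sum_inner_aux b v v
    calc ∑ j, (∑ k, b j k * v k) ^ 2
        = ∑ j, (∑ k, v k * b j k) * (∑ k, b j k * v k) := by
          refine Finset.sum_congr rfl fun j _ => ?_
          rw [pow_two]
          congr 1
          exact Finset.sum_congr rfl fun k _ => mul_comm _ _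
      _ = ∑ k, v k * v k := h
      _ = ∑ k, (v k) ^ 2 := by simp [pow_two]
  have hμle : ∀ j, hH.eigenvalues j ≤ (sv M 1) ^ 2 := by
    intro j
    have h1 := sqrt_le_sv1 M j
    have h2 : hH.eigenvalues j = (Real.sqrt (hH.eigenvalues j)) ^ 2 :=
      (Real.sq_sqrt (hμ0 j)).symm
    rw [h2]
    exact pow_le_pow_left₀ (Real.sqrt_nonneg _) h1 2
  calc ∑ i, ((M *ᵥ v) i) ^ 2
      = ∑ j, hH.eigenvalues j * (∑ k, b j k * v k) ^ 2 := by rw [step1, step2, step3]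
    _ ≤ ∑ j, (sv M 1) ^ 2 * (∑ k, b j k * v k) ^ 2 :=
        Finset.sum_le_sum fun j _ => mul_le_mul_of_nonneg_right (hμle j) (sq_nonneg _)
    _ = (sv M 1) ^ 2 * ∑ k, (v k) ^ 2 := by rw [← Finset.mul_sum, parseval]

lemma inv_sqrt_mul {x : ℝ} (hx : 0 ≤ x) : (Real.sqrt x)⁻¹ * x = Real.sqrt x := by
  rcases eq_or_lt_of_le hx with h | h
  · simp [← h]
  · have hs0 : Real.sqrt x ≠ 0 := ne_of_gt (Real.sqrt_pos.mpr h)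
    field_simp
    rw [Real.sq_sqrt hx]

lemma exists_dual (C : Matrix (Fin p) (Fin n) ℝ) :
    ∃ M : Matrix (Fin p) (Fin n) ℝ,
      (∀ v : Fin n → ℝ, ∑ i, ((M *ᵥ v) i) ^ 2 ≤ ∑ k, (v k) ^ 2) ∧
      frobInner M C = nuclearNorm C := by
  set hH := Matrix.isHermitian_conjTranspose_mul_self C with hHdef
  set b := hH.eigenvectorBasis with hbdef
  have hμ0 : ∀ j, 0 ≤ hH.eigenvalues j := fun j =>
    (Matrix.posSemidef_conjTranspose_mul_self C).eigenvalues_nonneg j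
  set u : Fin n → Fin p → ℝ :=
    fun j i => (Real.sqrt (hH.eigenvalues j))⁻¹ * (C *ᵥ ⇑(b j)) i with hudef
  have hCbdot : ∀ j l, (C *ᵥ ⇑(b j)) ⬝ᵥ (C *ᵥ ⇑(b l)) =
      if j = l then hH.eigenvalues l else 0 := by
    intro j l
    rw [dot_CC, hH.mulVec_eigenvectorBasis, dotProduct_smul]
    have : (⇑(b j) : Fin n → ℝ) ⬝ᵥ ⇑(b l) = if j = l then 1 else 0 := by
      simpa [dotProduct] using dot_b b j l
    rw [this]
    by_cases h : j = l <;> simp [h]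
  set e : Fin n → ℝ := fun j => (Real.sqrt (hH.eigenvalues j))⁻¹ * Real.sqrt (hH.eigenvalues j)
    with hedef
  have he01 : ∀ j, e j = 0 ∨ e j = 1 := by
    intro j
    rcases eq_or_ne (Real.sqrt (hH.eigenvalues j)) 0 with h | h
    · left; show (Real.sqrt (hH.eigenvalues j))⁻¹ * Real.sqrt (hH.eigenvalues j) = 0
      rw [h]; simp
    · right; show (Real.sqrt (hH.eigenvalues j))⁻¹ * Real.sqrt (hH.eigenvalues j) = 1
      exact inv_mul_cancel₀ h
  have huu : ∀ j l, ∑ i, u j i * u l i = if j = l then e j else 0 := by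
    intro j l
    have : ∑ i, u j i * u l i = (Real.sqrt (hH.eigenvalues j))⁻¹ *
        ((Real.sqrt (hH.eigenvalues l))⁻¹ * ((C *ᵥ ⇑(b j)) ⬝ᵥ (C *ᵥ ⇑(b l)))) := by
      simp only [hudef, dotProduct, Finset.mul_sum]
      exact Finset.sum_congr rfl fun i _ => by ring
    rw [this, hCbdot j l]
    by_cases h : j = l
    · subst h
      rw [if_pos rfl, if_pos rfl, hedef, inv_sqrt_mul (hμ0 j), ]
    · simp [h]
  refine ⟨Matrix.of (fun i k => ∑ j, u j i * b j k), ?_, ?_⟩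
  · intro v
    set c : Fin n → ℝ := fun j => ∑ k, b j k * v k with hcdef
    have hMv : ∀ i, ((Matrix.of (fun i k => ∑ j, u j i * b j k)) *ᵥ v) i
        = ∑ j, u j i * c j := by
      intro i
      simp only [mulVec, dotProduct, Matrix.of_apply, Finset.sum_mul]
      rw [Finset.sum_comm]
      refine Finset.sum_congr rfl fun j _ => ?_
      rw [hcdef, Finset.mul_sum]
      exact Finset.sum_congr rfl fun k _ => by ring
    have expand : ∑ i, (∑ j, u j i * c j) ^ 2
        = ∑ j, ∑ l, (c j * c l) * ∑ i, u j i * u l i := by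
      have h1 : ∀ i : Fin p, (∑ j, u j i * c j) ^ 2
          = ∑ j, ∑ l, (u j i * c j) * (u l i * c l) := by
        intro i
        rw [pow_two, Finset.sum_mul_sum]
      rw [Finset.sum_congr rfl fun i _ => h1 i, Finset.sum_comm]
      refine Finset.sum_congr rfl fun j _ => ?_
      rw [Finset.sum_comm]
      refine Finset.sum_congr rfl fun l _ => ?_
      rw [Finset.mul_sum]
      exact Finset.sum_congr rfl fun i _ => by ring
    have parseval : ∑ j, c j ^ 2 = ∑ k, (v k) ^ 2 := by
      have h := sum_inner_aux b v v
      calc ∑ j, c j ^ 2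
          = ∑ j, (∑ k, v k * b j k) * (∑ k, b j k * v k) := by
            refine Finset.sum_congr rfl fun j _ => ?_
            rw [hcdef, pow_two]
            congr 1
            exact Finset.sum_congr rfl fun k _ => mul_comm _ _
        _ = ∑ k, v k * v k := h
        _ = ∑ k, (v k) ^ 2 := by simp [pow_two]
    calc ∑ i, (((Matrix.of (fun i k => ∑ j, u j i * b j k)) *ᵥ v) i) ^ 2
        = ∑ i, (∑ j, u j i * c j) ^ 2 := by
          exact Finset.sum_congr rfl fun i _ => by rw [hMv i]
      _ = ∑ j, ∑ l, (c j * c l) * ∑ i, u j i * u l i := expand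
      _ = ∑ j, c j ^ 2 * e j := by
          refine Finset.sum_congr rfl fun j _ => ?_
          rw [Finset.sum_congr rfl fun l (_ : l ∈ Finset.univ) => by rw [huu j l]]
          simp only [mul_ite, mul_zero]
          rw [Finset.sum_ite_eq]
          simp only [Finset.mem_univ, if_true]
          ring
      _ ≤ ∑ j, c j ^ 2 := by
          refine Finset.sum_le_sum fun j _ => ?_
          rcases he01 j with h | h <;> rw [h] <;> [simp [sq_nonneg]; simp]
      _ = ∑ k, (v k) ^ 2 := parseval
  · rw [trace_formula b, nuclearNorm_eq C]
    refine Finset.sum_congr rfl fun j _ => ?_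
    have hMb : ∀ i, ((Matrix.of (fun i k => ∑ l, u l i * b l k)) *ᵥ ⇑(b j)) i = u j i := by
      intro i
      simp only [mulVec, dotProduct, Matrix.of_apply, Finset.sum_mul]
      rw [Finset.sum_comm]
      have h1 : ∀ l : Fin n, ∑ k, u l i * b l k * b j k = u l i * ∑ k, b l k * b j k := by
        intro l
        rw [Finset.mul_sum]
        exact Finset.sum_congr rfl fun k _ => by ring
      rw [Finset.sum_congr rfl fun l _ => h1 l]
      rw [Finset.sum_congr rfl fun l (_ : l ∈ Finset.univ) => by rw [dot_b b l j]]
      simp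
    calc ∑ i, ((Matrix.of (fun i k => ∑ l, u l i * b l k)) *ᵥ ⇑(b j)) i * (C *ᵥ ⇑(b j)) i
        = ∑ i, u j i * (C *ᵥ ⇑(b j)) i := by
          exact Finset.sum_congr rfl fun i _ => by rw [hMb i]
      _ = (Real.sqrt (hH.eigenvalues j))⁻¹ * ((C *ᵥ ⇑(b j)) ⬝ᵥ (C *ᵥ ⇑(b j))) := by
          simp only [hudef, dotProduct, Finset.mul_sum]
          exact Finset.sum_congr rfl fun i _ => by ring
      _ = Real.sqrt (hH.eigenvalues j) := by
          rw [hCbdot j j, if_pos rfl, inv_sqrt_mul (hμ0 j)]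

lemma frobInner_sub_right {m' n' : ℕ} (M P Q : Matrix (Fin m') (Fin n') ℝ) :
    frobInner M (P - Q) = frobInner M P - frobInner M Q := by
  simp only [frobInner, Matrix.sub_apply, mul_sub, Finset.sum_sub_distrib]

lemma frobInner_neg_left {m' n' : ℕ} (M P : Matrix (Fin m') (Fin n') ℝ) :
    frobInner (-M) P = - frobInner M P := by
  simp only [frobInner, Matrix.neg_apply, neg_mul, Finset.sum_neg_distrib]

lemma nuclear_triangle (A B : Matrix (Fin p) (Fin n) ℝ) :
    nuclearNorm (A - B) ≤ nuclearNorm A + nuclearNorm B := by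
  obtain ⟨M, hM, hMC⟩ := exists_dual (A - B)
  have h1 : frobInner M A ≤ 1 * nuclearNorm A :=
    trace_duality M A zero_le_one fun v => by simpa using hM v
  have h2 : frobInner (-M) B ≤ 1 * nuclearNorm B :=
    trace_duality (-M) B zero_le_one fun v => by
      simpa [Matrix.neg_mulVec, neg_sq] using hM v
  have h3 := frobInner_neg_left M B
  rw [← hMC, frobInner_sub_right]
  linarith

end NNPAux

/-- Theorem 10 (deterministic form): if d₁(X'E) ≤ τ, the nuclear norm penalized estimator
Ã satisfies ‖XÃ − XA‖_F² ≤ ‖XB − XA‖_F² + 4τ‖B‖₁ for every B. -/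
theorem nnp_oracle_inequality {m n p : ℕ}
    (Y : Matrix (Fin m) (Fin n) ℝ) (X : Matrix (Fin m) (Fin p) ℝ)
    (A : Matrix (Fin p) (Fin n) ℝ)
    (τ : ℝ) (hτ : 0 < τ)
    (Atil : Matrix (Fin p) (Fin n) ℝ)
    (hmin : ∀ B : Matrix (Fin p) (Fin n) ℝ,
      frobSq (Y - X * Atil) + 2 * τ * nuclearNorm Atil
        ≤ frobSq (Y - X * B) + 2 * τ * nuclearNorm B)
    (hevent : sv (Xᵀ * (Y - X * A)) 1 ≤ τ) :
    ∀ B : Matrix (Fin p) (Fin n) ℝ,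
      frobSq (X * Atil - X * A) ≤ frobSq (X * B - X * A) + 4 * τ * nuclearNorm B := by
  intro B
  set E := Y - X * A with hE
  have frobSq_sub : ∀ (P Q : Matrix (Fin m) (Fin n) ℝ),
      frobSq (P - Q) = frobSq P - 2 * frobInner P Q + frobSq Q := by
    intro P Q
    have h : ∀ i j, (P i j - Q i j) ^ 2
        = P i j ^ 2 - 2 * (P i j * Q i j) + Q i j ^ 2 := fun i j => by ring
    simp only [frobSq, frobInner, Matrix.sub_apply]
    rw [Finset.sum_congr rfl fun i (_ : i ∈ Finset.univ) =>
      Finset.sum_congr rfl fun j (_ : j ∈ Finset.univ) => h i j]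
    simp [Finset.sum_add_distrib, Finset.sum_sub_distrib, Finset.mul_sum]
  have frobInner_mul : ∀ (D : Matrix (Fin p) (Fin n) ℝ),
      frobInner E (X * D) = frobInner (Xᵀ * E) D := by
    intro D
    simp only [frobInner, Matrix.mul_apply, Matrix.transpose_apply]
    calc ∑ i, ∑ j, E i j * ∑ k, X i k * D k j
        = ∑ i, ∑ j, ∑ k, X i k * E i j * D k j := by
          refine Finset.sum_congr rfl fun i _ => Finset.sum_congr rfl fun j _ => ?_
          rw [Finset.mul_sum]; exact Finset.sum_congr rfl fun k _ => by ring
      _ = ∑ i, ∑ k, ∑ j, X i k * E i j * D k j :=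
          Finset.sum_congr rfl fun i _ => Finset.sum_comm
      _ = ∑ k, ∑ i, ∑ j, X i k * E i j * D k j := Finset.sum_comm
      _ = ∑ k, ∑ j, ∑ i, X i k * E i j * D k j :=
          Finset.sum_congr rfl fun k _ => Finset.sum_comm
      _ = ∑ k, ∑ j, (∑ i, X i k * E i j) * D k j := by
          refine Finset.sum_congr rfl fun k _ => Finset.sum_congr rfl fun j _ => ?_
          rw [Finset.sum_mul]
  have key : frobInner (Xᵀ * E) (Atil - B) ≤ τ * nuclearNorm (Atil - B) :=
    NNPAux.trace_duality _ _ hτ.le fun v =>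
      le_trans (NNPAux.sv_bound _ v)
        (mul_le_mul_of_nonneg_right
          (pow_le_pow_left₀ (NNPAux.sv1_nonneg _) hevent 2)
          (Finset.sum_nonneg fun k _ => sq_nonneg _))
  have tri := NNPAux.nuclear_triangle Atil B
  have hmin' := hmin B
  rw [show Y - X * Atil = E - (X * Atil - X * A) by rw [hE]; abel,
    show Y - X * B = E - (X * B - X * A) by rw [hE]; abel,
    frobSq_sub E (X * Atil - X * A), frobSq_sub E (X * B - X * A)] at hmin'
  have hsplit : frobInner E (X * Atil - X * A) - frobInner E (X * B - X * A)
      = frobInner (Xᵀ * E) (Atil - B) := by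
    rw [← NNPAux.frobInner_sub_right,
      show (X * Atil - X * A) - (X * B - X * A) = X * (Atil - B) by
        rw [Matrix.mul_sub]; abel,
      frobInner_mul]
  have hτtri : τ * nuclearNorm (Atil - B) ≤ τ * (nuclearNorm Atil + nuclearNorm B) :=
    mul_le_mul_of_nonneg_left tri hτ.le
  linarith
end
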